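/- Let n ≥ 1, Q = 2n+2, and let β ≤ 0 be such that Q - 2 + β > 0. Then there exists a constant C > 0, independent of λ, such that for every λ > 0 and every measurable set D ⊂ B_λ(0) = {ξ ∈ ℍⁿ : d(ξ) < λ}, one has ∫_D |z|^β dz dt ≤ C λ² |D|^{(Q-2+β)/Q}. -/

import Mathlib

open MeasureTheory ENNReal Real Set Metric

local notation "dim" => Module.finrank ℝ

lemma lintegral_rpow_norm_ball {E : Type*} [NormedAddCommGroup E] [NormedSpace ℝ E]
    [MeasurableSpace E] [BorelSpace E] [FiniteDimensional ℝ E] [Nontrivial E]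
    (μ : Measure E) [μ.IsAddHaarMeasure] (s lam : ℝ)
    (hs : -(dim E : ℝ) < s) (hlam : 0 < lam) :
    ∫⁻ x in ball (0:E) lam, ENNReal.ofReal (‖x‖ ^ s) ∂μ =
      μ.toSphere univ *
        ENNReal.ofReal (lam ^ ((dim E : ℝ) + s) / ((dim E : ℝ) + s)) := by
  set g : ℝ → ℝ≥0∞ := (Iio lam).indicator (fun r => ENNReal.ofReal (r ^ s)) with hg
  have hmg : Measurable g := by
    apply Measurable.indicator ?_ measurableSet_Iio
    fun_prop
  have hmg2 : Measurable fun y : sphere (0:E) 1 × Ioi (0:ℝ) => g y.2.1 :=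
    hmg.comp (measurable_subtype_coe.comp measurable_snd)
  have step1 : ∫⁻ x in ball (0:E) lam, ENNReal.ofReal (‖x‖ ^ s) ∂μ = ∫⁻ x, g ‖x‖ ∂μ := by
    rw [← lintegral_indicator measurableSet_ball]
    congr 1
    ext x
    by_cases hx : x ∈ ball (0:E) lam
    · rw [indicator_of_mem hx, hg, indicator_of_mem (by simpa [mem_ball_zero_iff] using hx)]
    · rw [indicator_of_notMem hx, hg,
        indicator_of_notMem (by simpa [mem_ball_zero_iff] using hx)]
  have step2 : ∫⁻ x, g ‖x‖ ∂μ = ∫⁻ x : ({(0:E)}ᶜ : Set E), g ‖x.1‖ ∂(μ.comap (↑)) := by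
    rw [lintegral_subtype_comap (measurableSet_singleton _).compl fun x => g ‖x‖,
      restrict_compl_singleton]
  have step3 : ∫⁻ x : ({(0:E)}ᶜ : Set E), g ‖x.1‖ ∂(μ.comap (↑)) =
      ∫⁻ y : sphere (0:E) 1 × Ioi (0:ℝ), g y.2.1
        ∂(μ.toSphere.prod (.volumeIoiPow (dim E - 1))) := by
    have := μ.measurePreserving_homeomorphUnitSphereProd.lintegral_comp
      (f := fun y : sphere (0:E) 1 × Ioi (0:ℝ) => g y.2.1) hmg2
    simpa using this
  have step4 : ∫⁻ y : sphere (0:E) 1 × Ioi (0:ℝ), g y.2.1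
        ∂(μ.toSphere.prod (.volumeIoiPow (dim E - 1))) =
      μ.toSphere univ * ∫⁻ r : Ioi (0:ℝ), g r.1 ∂(Measure.volumeIoiPow (dim E - 1)) := by
    rw [lintegral_prod _ hmg2.aemeasurable]
    simp [lintegral_const, mul_comm]
  have step5 : ∫⁻ r : Ioi (0:ℝ), g r.1 ∂(Measure.volumeIoiPow (dim E - 1)) =
      ∫⁻ r in Ioi (0:ℝ), ENNReal.ofReal (r ^ (dim E - 1)) * g r := by
    have hmg3 : Measurable fun r : Ioi (0:ℝ) => g r.1 := hmg.comp measurable_subtype_coe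
    rw [Measure.volumeIoiPow, lintegral_withDensity_eq_lintegral_mul _
      (f := fun r : Ioi (0:ℝ) => ENNReal.ofReal (r.1 ^ (dim E - 1))) (by fun_prop) hmg3]
    simp only [Pi.mul_apply]
    exact lintegral_subtype_comap measurableSet_Ioi
      (fun r : ℝ => ENNReal.ofReal (r ^ (dim E - 1)) * g r)
  rw [step1, step2, step3, step4, step5]
  congr 1
  have hd : (1:ℕ) ≤ dim E := Module.finrank_pos
  have key : ∀ r ∈ Ioi (0:ℝ), ENNReal.ofReal (r ^ (dim E - 1)) * g r =
      (Iio lam).indicator (fun r => ENNReal.ofReal (r ^ ((dim E : ℝ) - 1 + s))) r := by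
    intro r hr
    have hr0 : (0:ℝ) < r := hr
    by_cases hrl : r ∈ Iio lam
    · rw [hg, indicator_of_mem hrl, indicator_of_mem hrl, ← ENNReal.ofReal_mul (by positivity)]
      congr 1
      rw [← Real.rpow_natCast r (dim E - 1), ← Real.rpow_add hr0]
      congr 1
      push_cast [Nat.cast_sub hd]
      ring
    · rw [hg, indicator_of_notMem hrl, indicator_of_notMem hrl, mul_zero]
  rw [setLIntegral_congr_fun measurableSet_Ioi key]
  have ha : (-1:ℝ) < (dim E : ℝ) - 1 + s := by
    have : (1:ℝ) ≤ (dim E : ℝ) := by exact_mod_cast hd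
    linarith
  calc ∫⁻ r in Ioi (0:ℝ),
        (Iio lam).indicator (fun r => ENNReal.ofReal (r ^ ((dim E : ℝ) - 1 + s))) r
      = ∫⁻ r in Ioi (0:ℝ) ∩ Iio lam, ENNReal.ofReal (r ^ ((dim E : ℝ) - 1 + s)) := by
        rw [lintegral_indicator measurableSet_Iio, Measure.restrict_restrict measurableSet_Iio]
        rw [inter_comm]
    _ = ∫⁻ r in Ioo (0:ℝ) lam, ENNReal.ofReal (r ^ ((dim E : ℝ) - 1 + s)) := by
        rw [Ioi_inter_Iio]
    _ = ENNReal.ofReal (∫ r in Ioo (0:ℝ) lam, r ^ ((dim E : ℝ) - 1 + s)) := by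
        rw [← ofReal_integral_eq_lintegral_ofReal]
        · rw [← intervalIntegral.integrableOn_Ioo_rpow_iff hlam] at ha
          exact ha
        · filter_upwards [ae_restrict_mem measurableSet_Ioo] with r hrm
          exact Real.rpow_nonneg hrm.1.le _
    _ = ENNReal.ofReal (lam ^ ((dim E : ℝ) + s) / ((dim E : ℝ) + s)) := by
        congr 1
        rw [Measure.restrict_congr_set Ioo_ae_eq_Ioc, ← intervalIntegral.integral_of_le hlam.le,
          integral_rpow (Or.inl ha), Real.zero_rpow (by linarith), sub_zero,
          show ((dim E:ℝ) - 1 + s) + 1 = (dim E:ℝ) + s by ring]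

set_option maxHeartbeats 1000000 in
theorem weighted_measure_estimate_in_gauge_ball (n : ℕ) (hn : 1 ≤ n) (β : ℝ)
    (hβ : β ≤ 0) (hQβ : 0 < 2 * (n : ℝ) + 2 - 2 + β) :
    ∃ C : ℝ, 0 < C ∧ ∀ lam : ℝ, 0 < lam →
      ∀ D : Set (EuclideanSpace ℝ (Fin (2 * n)) × ℝ), MeasurableSet D →
        D ⊆ {ξ | (‖ξ.1‖ ^ 4 + ξ.2 ^ 2) ^ ((1 : ℝ) / 4) < lam} →
        ∫⁻ ξ in D, ENNReal.ofReal (‖ξ.1‖ ^ β) ≤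
          ENNReal.ofReal (C * lam ^ 2) *
            volume D ^ ((2 * (n : ℝ) + 2 - 2 + β) / (2 * (n : ℝ) + 2)) := by
  set E := EuclideanSpace ℝ (Fin (2 * n)) with hE
  set d : ℝ := 2 * (n:ℝ) with hd_def
  have hdim : (dim E : ℝ) = d := by
    show ((Module.finrank ℝ (EuclideanSpace ℝ (Fin (2*n))) : ℝ)) = d
    rw [finrank_euclideanSpace, Fintype.card_fin]
    push_cast; ring
  haveI : Nontrivial E := by
    apply Module.nontrivial_of_finrank_pos (R := ℝ)
    have h1 : (0:ℝ) < (dim E : ℝ) := by rw [hdim, hd_def]; positivity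
    exact_mod_cast h1
  have hdβ : 0 < d + β := by rw [hd_def]; linarith
  have hβ2 : β < 2 := by linarith
  have hd0 : 0 < d := by rw [hd_def]; positivity
  have hd2 : 0 < d + 2 := by linarith
  have h2β : (2:ℝ) - β ≠ 0 := by linarith
  have hd2' : d + 2 ≠ 0 := by linarith
  have hdβ' : d + β ≠ 0 := hdβ.ne'
  set p : ℝ := (d + 2) / (2 - β) with hp
  set q : ℝ := (d + 2) / (d + β) with hq
  have hp1 : 1 < p := by
    rw [hp, lt_div_iff₀ (by linarith)]; linarith
  have hp0 : 0 < p := by linarith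
  have hq0 : 0 < q := by rw [hq]; positivity
  have hpq : p.HolderConjugate q := by
    rw [Real.holderConjugate_iff]
    constructor
    · exact hp1
    · rw [hp, hq]
      field_simp
      ring
  set s : ℝ := β * p with hs
  have hds : 0 < d + s := by
    have h : d + s = 2 * (d + β) / (2 - β) := by
      rw [hs, hp]; field_simp; ring
    rw [h]; exact div_pos (by linarith) (by linarith)
  have hsd : -d < s := by linarith
  have hinvq : 1 / q = (2 * (n:ℝ) + 2 - 2 + β) / (2 * (n:ℝ) + 2) := by
    rw [hq, one_div, inv_div, ← hd_def]
    congr 1 <;> ring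
  have hexp2 : (d + s + 2) * (1 / p) = 2 := by
    rw [hs, hp]; field_simp; ring
  set I₀ : ℝ≥0∞ := (volume : Measure E).toSphere univ with hI₀
  have hI₀top : I₀ ≠ ⊤ := measure_ne_top _ _
  have hI₀pos : 0 < I₀ := by
    rw [hI₀, Measure.toSphere_apply_univ]
    have h1 : (0:ℝ≥0∞) < (dim E : ℝ≥0∞) := by
      have : 0 < dim E := Module.finrank_pos
      exact_mod_cast this
    exact ENNReal.mul_pos h1.ne' (measure_ball_pos _ _ one_pos).ne'
  have hA : 0 < I₀.toReal := ENNReal.toReal_pos hI₀pos.ne' hI₀top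
  set C₀ : ℝ := I₀.toReal * 2 / (d + s) with hC₀
  have hC₀pos : 0 < C₀ := by positivity
  refine ⟨C₀ ^ (1 / p), by positivity, ?_⟩
  intro lam hlam D hD hDsub
  set S : Set (E × ℝ) := (ball (0:E) lam) ×ˢ (Ioo (-(lam^2)) (lam^2)) with hS
  have hSm : MeasurableSet S := measurableSet_ball.prod measurableSet_Ioo
  have hDS : D ⊆ S := by
    intro ξ hξ
    have h := hDsub hξ
    simp only [mem_setOf_eq] at h
    have h0 : (0:ℝ) ≤ ‖ξ.1‖ ^ 4 + ξ.2 ^ 2 := by positivity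
    have h4 : ‖ξ.1‖ ^ 4 + ξ.2 ^ 2 < lam ^ 4 := by
      have hlt := pow_lt_pow_left₀ h (Real.rpow_nonneg h0 _) (n := 4) (by norm_num)
      calc ‖ξ.1‖ ^ 4 + ξ.2 ^ 2
          = ((‖ξ.1‖ ^ 4 + ξ.2 ^ 2) ^ ((1:ℝ)/4)) ^ (4:ℕ) := by
            rw [← Real.rpow_natCast ((‖ξ.1‖ ^ 4 + ξ.2 ^ 2) ^ ((1:ℝ)/4)) 4,
              ← Real.rpow_mul h0]
            norm_num
        _ < lam ^ 4 := hlt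
    constructor
    · rw [mem_ball_zero_iff]
      refine lt_of_pow_lt_pow_left₀ 4 hlam.le ?_
      have : ξ.2 ^ 2 ≥ 0 := sq_nonneg _
      linarith
    · have h2 : ξ.2 ^ 2 < (lam ^ 2) ^ 2 := by
        have : (0:ℝ) ≤ ‖ξ.1‖ ^ 4 := by positivity
        nlinarith
      have habs : |ξ.2| < lam ^ 2 := by
        refine lt_of_pow_lt_pow_left₀ 2 (by positivity) ?_
        rwa [sq_abs]
      exact ⟨by linarith [abs_lt.1 habs], (abs_lt.1 habs).2⟩
  set w : E × ℝ → ℝ≥0∞ := fun ξ => ENNReal.ofReal (‖ξ.1‖ ^ β) with hw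
  have hwm : Measurable w := by rw [hw]; fun_prop
  set g : E × ℝ → ℝ≥0∞ := D.indicator (fun _ => (1:ℝ≥0∞)) with hg
  have hgm : Measurable g := measurable_const.indicator hD
  set μ₀ : Measure (E × ℝ) := volume.restrict S with hμ₀
  have hres : μ₀.restrict D = volume.restrict D := by
    rw [hμ₀, Measure.restrict_restrict hD, inter_eq_left.2 hDS]
  have lhs_eq : ∫⁻ ξ in D, ENNReal.ofReal (‖ξ.1‖ ^ β) = ∫⁻ a, (w * g) a ∂μ₀ := by
    have h : w * g = D.indicator w := by
      funext a
      by_cases ha : a ∈ D <;>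
        simp [hg, hw, indicator_of_mem, indicator_of_notMem, ha]
    rw [h, lintegral_indicator hD, hres]
  have holder := ENNReal.lintegral_mul_le_Lp_mul_Lq μ₀ hpq hwm.aemeasurable hgm.aemeasurable
  have factor2 : ∫⁻ a, g a ^ q ∂μ₀ = volume D := by
    have hgq : ∀ a, g a ^ q = g a := by
      intro a
      by_cases ha : a ∈ D <;>
        simp [hg, indicator_of_mem, indicator_of_notMem, ha,
          ENNReal.zero_rpow_of_pos hq0]
    simp only [hgq]
    rw [hg, lintegral_indicator hD, hres]
    simp
  have factor1 : ∫⁻ a, w a ^ p ∂μ₀ =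
      (∫⁻ z in ball (0:E) lam, ENNReal.ofReal (‖z‖ ^ s) ∂volume) *
        volume (Ioo (-(lam^2)) (lam^2)) := by
    have hwp : ∀ a : E × ℝ, w a ^ p = ENNReal.ofReal (‖a.1‖ ^ s) := by
      intro a
      show ENNReal.ofReal (‖a.1‖ ^ β) ^ p = ENNReal.ofReal (‖a.1‖ ^ s)
      rw [ENNReal.ofReal_rpow_of_nonneg (Real.rpow_nonneg (norm_nonneg _) _) hp0.le,
        ← Real.rpow_mul (norm_nonneg _) β p, ← hs]
    simp only [hwp]
    rw [hμ₀, hS, Measure.volume_eq_prod, ← Measure.prod_restrict]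
    rw [lintegral_prod _ (by fun_prop : Measurable fun ξ : E × ℝ =>
      ENNReal.ofReal (‖ξ.1‖ ^ s)).aemeasurable]
    simp only [lintegral_const]
    rw [lintegral_mul_const _ (by fun_prop : Measurable fun z : E =>
      ENNReal.ofReal (‖z‖ ^ s))]
    simp [Measure.restrict_apply_univ]
  have hsd' : -((dim E : ℝ)) < s := by rw [hdim]; exact hsd
  have ball_eq := lintegral_rpow_norm_ball (volume : Measure E) s lam hsd' hlam
  rw [hdim] at ball_eq
  have factor1' : (∫⁻ a, w a ^ p ∂μ₀) ^ (1/p) ≤ ENNReal.ofReal (C₀ ^ (1/p) * lam ^ 2) := by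
    rw [factor1, ball_eq, Real.volume_Ioo,
      show lam ^ 2 - -lam ^ 2 = 2 * lam ^ 2 from by ring, ← hI₀]
    rw [← ENNReal.ofReal_toReal hI₀top, ← ENNReal.ofReal_mul (by positivity),
      ← ENNReal.ofReal_mul (by positivity)]
    rw [ENNReal.ofReal_rpow_of_nonneg (by positivity) (by positivity)]
    apply le_of_eq
    congr 1
    have hval : I₀.toReal * (lam ^ (d + s) / (d + s)) * (2 * lam ^ 2)
        = C₀ * lam ^ (d + s + 2) := by
      rw [hC₀]
      have h : lam ^ (d + s + 2) = lam ^ (d + s) * lam ^ (2:ℕ) := by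
        rw [Real.rpow_add hlam]
        congr 1
        rw [show (2:ℝ) = ((2:ℕ):ℝ) from by norm_num, Real.rpow_natCast]
      rw [h]
      field_simp
    rw [hval, Real.mul_rpow hC₀pos.le (Real.rpow_nonneg hlam.le _)]
    congr 1
    rw [← Real.rpow_mul hlam.le, hexp2,
      show (2:ℝ) = ((2:ℕ):ℝ) from by norm_num, Real.rpow_natCast]
  calc ∫⁻ ξ in D, ENNReal.ofReal (‖ξ.1‖ ^ β)
      = ∫⁻ a, (w * g) a ∂μ₀ := lhs_eq
    _ ≤ (∫⁻ a, w a ^ p ∂μ₀) ^ (1/p) * (∫⁻ a, g a ^ q ∂μ₀) ^ (1/q) := holder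
    _ ≤ ENNReal.ofReal (C₀ ^ (1/p) * lam ^ 2) * volume D ^ (1/q) := by
        rw [factor2]
        exact mul_le_mul_of_nonneg_right factor1' zero_le
    _ = ENNReal.ofReal (C₀ ^ (1/p) * lam ^ 2) *
          volume D ^ ((2 * (n:ℝ) + 2 - 2 + β) / (2 * (n:ℝ) + 2)) := by rw [hinvq]
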